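/- Define \(\nu_{1,m} = 2\pi\int_{-\pi}^{\pi} y\, W_m(y)\, K_m(y)\,dy\), where \(K_m\) is the Fejér kernel and \(W_m(y) = \int_{-\pi}^{y} K_m(s)\,ds\). Then \(\nu_{1,m} = \frac{2\log m}{m+1} + \frac{2(\log 2 + \gamma)}{m+1} + O(m^{-2})\) as \(m\to\infty\), where \(\gamma\) is the Euler–Mascheroni constant. -/

import Mathlib

open Finset

noncomputable def fejerKernel (m : ℕ) (s : ℝ) : ℝ :=
  1 / (2 * Real.pi) +
    (1 / Real.pi) * ∑ k ∈ Finset.Icc 1 m, (1 - (k : ℝ) / (m + 1)) * Real.cos (k * s)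

noncomputable def fejerW (m : ℕ) (y : ℝ) : ℝ :=
  ∫ s in (-Real.pi)..y, fejerKernel m s

open Real intervalIntegral Filter Topology

noncomputable def aco (m : ℕ) (k : ℕ) : ℝ := 1 - (k : ℝ) / (m + 1)


lemma hasDerivAt_sin_mul (c x : ℝ) : HasDerivAt (fun y => Real.sin (c*y)) (c * Real.cos (c*x)) x := by
  simpa [mul_comm, Function.comp_def] using (Real.hasDerivAt_sin (c*x)).comp x ((hasDerivAt_id x).const_mul c)

lemma hasDerivAt_cos_mul (c x : ℝ) : HasDerivAt (fun y => Real.cos (c*y)) (-(c * Real.sin (c*x))) x := by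
  simpa [mul_comm, neg_mul, mul_neg, Function.comp_def] using (Real.hasDerivAt_cos (c*x)).comp x ((hasDerivAt_id x).const_mul c)

lemma integral_cos_mul' (c : ℝ) (hc : c ≠ 0) (a b : ℝ) :
    ∫ x in a..b, Real.cos (c*x) = (Real.sin (c*b) - Real.sin (c*a))/c := by
  have h : ∀ x ∈ Set.uIcc a b, HasDerivAt (fun y => Real.sin (c*y)/c) (Real.cos (c*x)) x := by
    intro x _
    simpa [mul_div_assoc, mul_div_cancel_left₀ _ hc] using (hasDerivAt_sin_mul c x).div_const c
  rw [integral_eq_sub_of_hasDerivAt h ((Real.continuous_cos.comp (continuous_const.mul continuous_id)).intervalIntegrable a b)]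
  ring

lemma integral_sin_mul' (c : ℝ) (hc : c ≠ 0) (a b : ℝ) :
    ∫ x in a..b, Real.sin (c*x) = (Real.cos (c*a) - Real.cos (c*b))/c := by
  have h : ∀ x ∈ Set.uIcc a b, HasDerivAt (fun y => -(Real.cos (c*y)/c)) (Real.sin (c*x)) x := by
    intro x _
    simpa [neg_div, mul_div_assoc, mul_div_cancel_left₀ _ hc, Pi.neg_def] using ((hasDerivAt_cos_mul c x).div_const c).neg
  rw [integral_eq_sub_of_hasDerivAt h ((Real.continuous_sin.comp (continuous_const.mul continuous_id)).intervalIntegrable a b)]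
  ring

lemma integral_id_mul_sin (c : ℝ) (hc : c ≠ 0) (a b : ℝ) :
    ∫ x in a..b, x * Real.sin (c*x)
      = (Real.sin (c*b)/c^2 - b * Real.cos (c*b)/c) - (Real.sin (c*a)/c^2 - a * Real.cos (c*a)/c) := by
  have h : ∀ x ∈ Set.uIcc a b,
      HasDerivAt (fun y => Real.sin (c*y)/c^2 - y * Real.cos (c*y)/c) (x * Real.sin (c*x)) x := by
    intro x _
    have h1 := (hasDerivAt_sin_mul c x).div_const (c^2)
    have h2 := (((hasDerivAt_id x).mul (hasDerivAt_cos_mul c x))).div_const c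
    convert (config := {postTransparency := .default}) h1.sub h2 using 1
    simp only [id_eq]
    field_simp
    ring
  rw [integral_eq_sub_of_hasDerivAt h ((continuous_id.mul (Real.continuous_sin.comp (continuous_const.mul continuous_id))).intervalIntegrable a b)]

lemma cos_nat_pi (k : ℕ) : Real.cos (k * π) = (-1)^k := by
  simpa using Real.cos_nat_mul_pi_sub 0 k

lemma integral_cos_int_pi (n : ℤ) (hn : n ≠ 0) : ∫ x in (-π)..π, Real.cos ((n:ℝ)*x) = 0 := by
  have h : ((n:ℝ)) ≠ 0 := Int.cast_ne_zero.mpr hn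
  rw [integral_cos_mul' _ h]
  simp [Real.sin_int_mul_pi]

lemma integral_sin_c_pi (c : ℝ) (hc : c ≠ 0) : ∫ x in (-π)..π, Real.sin (c*x) = 0 := by
  rw [integral_sin_mul' _ hc]
  simp [Real.cos_neg, mul_neg]

lemma integral_id_mul_sin_pi (k : ℕ) (hk : 1 ≤ k) :
    ∫ x in (-π)..π, x * Real.sin (k*x) = -2*π*(-1)^k/k := by
  have h : ((k:ℝ)) ≠ 0 := Nat.cast_ne_zero.mpr (by omega)
  rw [integral_id_mul_sin _ h]
  rw [show (k:ℝ) * π = (k:ℝ)*π from rfl]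
  simp only [mul_neg, Real.sin_neg, Real.cos_neg, Real.sin_nat_mul_pi, cos_nat_pi]
  field_simp
  ring

lemma integral_sin_mul_sin_pi (j k : ℕ) (hj : 1 ≤ j) (hk : 1 ≤ k) :
    ∫ x in (-π)..π, Real.sin (j*x) * Real.sin (k*x) = if j = k then π else 0 := by
  have key : ∀ x : ℝ, Real.sin (j*x) * Real.sin (k*x)
      = (Real.cos (((j:ℝ)-k)*x) - Real.cos (((j:ℝ)+k)*x))/2 := by
    intro x
    rw [sub_mul, add_mul, Real.cos_sub, Real.cos_add]
    ring
  rw [intervalIntegral.integral_congr (fun x _ => key x)]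
  have hjk : ((j:ℝ)+k) ≠ 0 := by positivity
  by_cases h : j = k
  · subst h
    have h0 : ∀ x : ℝ, (Real.cos (((j:ℝ)-j)*x) - Real.cos (((j:ℝ)+j)*x))/2
        = 1/2 - Real.cos (((j:ℝ)+j)*x)/2 := by intro x; simp; ring
    rw [intervalIntegral.integral_congr (fun x _ => h0 x), intervalIntegral.integral_sub,
      intervalIntegral.integral_const]
    · have : ∫ x in (-π)..π, Real.cos (((j:ℝ)+j)*x)/2 = 0 := by
        rw [intervalIntegral.integral_div]
        have := integral_cos_int_pi (j+j : ℤ) (by exact_mod_cast by omega)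
        push_cast at this ⊢
        rw [this]; ring
      rw [this]
      simp
      ring
    · exact intervalIntegrable_const
    · exact ((Real.continuous_cos.comp (continuous_const.mul continuous_id)).div_const 2).intervalIntegrable _ _
  · simp only [h, if_false]
    rw [intervalIntegral.integral_div, intervalIntegral.integral_sub]
    · have h1 := integral_cos_int_pi ((j:ℤ)-k) (by omega)
      have h2 := integral_cos_int_pi ((j:ℤ)+k) (by omega)
      push_cast at h1 h2
      rw [h1, h2]; ring
    · exact (Real.continuous_cos.comp (continuous_const.mul continuous_id)).intervalIntegrable _ _
    · exact (Real.continuous_cos.comp (continuous_const.mul continuous_id)).intervalIntegrable _ _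


lemma contCos (k : ℕ) : Continuous (fun s : ℝ => Real.cos (k * s)) :=
  Real.continuous_cos.comp (continuous_const.mul continuous_id)

lemma fejerKernel_continuous (m : ℕ) : Continuous (fejerKernel m) := by
  unfold fejerKernel
  exact continuous_const.add (continuous_const.mul
    (continuous_finset_sum _ (fun k _ => continuous_const.mul (contCos k))))

lemma fejerW_eq (m : ℕ) (y : ℝ) :
    fejerW m y = (y + π)/(2*π) + (1/π) * ∑ k ∈ Icc 1 m, aco m k * (Real.sin (k*y)/k) := by
  unfold fejerW fejerKernel
  rw [intervalIntegral.integral_add intervalIntegrable_const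
    (Continuous.intervalIntegrable (by fun_prop) _ _),
    intervalIntegral.integral_const_mul,
    intervalIntegral.integral_finset_sum (fun k _ => Continuous.intervalIntegrable (by fun_prop) _ _)]
  congr 1
  · simp only [intervalIntegral.integral_const, smul_eq_mul]
    ring
  · congr 1
    refine Finset.sum_congr rfl (fun k hk => ?_)
    have hk1 : 1 ≤ k := (Finset.mem_Icc.mp hk).1
    have hkne : ((k:ℝ)) ≠ 0 := Nat.cast_ne_zero.mpr (by omega)
    rw [intervalIntegral.integral_const_mul, integral_cos_mul' _ hkne]
    unfold aco
    rw [mul_neg, Real.sin_neg, Real.sin_nat_mul_pi]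
    ring

lemma fejerW_neg_pi (m : ℕ) : fejerW m (-π) = 0 := by
  rw [fejerW_eq]
  have : ∀ k ∈ Icc 1 m, aco m k * (Real.sin (k*(-π))/k) = 0 := by
    intro k _
    rw [mul_neg, Real.sin_neg, Real.sin_nat_mul_pi]
    simp
  rw [Finset.sum_congr rfl this]
  simp

lemma fejerW_pi (m : ℕ) : fejerW m π = 1 := by
  rw [fejerW_eq]
  have : ∀ k ∈ Icc 1 m, aco m k * (Real.sin (k*π)/k) = 0 := by
    intro k _
    rw [Real.sin_nat_mul_pi]
    simp
  rw [Finset.sum_congr rfl this]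
  have hπ : π ≠ 0 := Real.pi_ne_zero
  simp only [Finset.sum_const_zero]
  field_simp
  ring

lemma hasDerivAt_fejerW (m : ℕ) (y : ℝ) :
    HasDerivAt (fejerW m) (fejerKernel m y) y := by
  have hfun : fejerW m = fun y => (y + π)/(2*π) + (1/π) * ∑ k ∈ Icc 1 m, aco m k * (Real.sin (k*y)/k) :=
    funext (fejerW_eq m)
  rw [hfun]
  have h1 : HasDerivAt (fun y : ℝ => (y + π)/(2*π)) (1/(2*π)) y := by
    simpa using ((hasDerivAt_id y).add_const π).div_const (2*π)
  have h2 : ∀ k ∈ Icc 1 m, HasDerivAt (fun y => aco m k * (Real.sin (k*y)/k))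
      (aco m k * Real.cos (k*y)) y := by
    intro k hk
    have hk1 : 1 ≤ k := (Finset.mem_Icc.mp hk).1
    have hkne : ((k:ℝ)) ≠ 0 := Nat.cast_ne_zero.mpr (by omega)
    have := ((hasDerivAt_sin_mul (k:ℝ) y).div_const k).const_mul (aco m k)
    convert (config := {postTransparency := .default}) this using 1
    field_simp
  have hsum := HasDerivAt.fun_sum h2
  have hK : fejerKernel m y = 1/(2*π) + (1/π) * ∑ k ∈ Icc 1 m, aco m k * Real.cos (k*y) := rfl
  rw [hK]
  exact h1.add ((hsum).const_mul (1/π))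

lemma fejerW_continuous (m : ℕ) : Continuous (fejerW m) :=
  continuous_iff_continuousAt.mpr (fun y => (hasDerivAt_fejerW m y).continuousAt)

lemma ibp_step (m : ℕ) :
    ∫ y in (-π)..π, y * fejerW m y * fejerKernel m y
      = π/2 - (1/2) * ∫ y in (-π)..π, (fejerW m y)^2 := by
  have hG : ∀ y ∈ Set.uIcc (-π) π, HasDerivAt (fun y => y * (fejerW m y * fejerW m y) / 2)
      ((fejerW m y)^2/2 + y * fejerW m y * fejerKernel m y) y := by
    intro y _
    have hW := hasDerivAt_fejerW m y
    have := ((hasDerivAt_id y).mul (hW.mul hW)).div_const 2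
    convert (config := {postTransparency := .default}) this using 1
    simp only [id_eq, Pi.mul_apply]
    ring
  have hcont : Continuous (fun y => (fejerW m y)^2/2 + y * fejerW m y * fejerKernel m y) :=
    (((fejerW_continuous m).pow 2).div_const 2).add
      ((continuous_id.mul (fejerW_continuous m)).mul (fejerKernel_continuous m))
  have key := intervalIntegral.integral_eq_sub_of_hasDerivAt hG (hcont.intervalIntegrable _ _)
  rw [fejerW_pi, fejerW_neg_pi] at key
  have hsplit : ∫ y in (-π)..π, ((fejerW m y)^2/2 + y * fejerW m y * fejerKernel m y)
      = (∫ y in (-π)..π, (fejerW m y)^2/2) + ∫ y in (-π)..π, y * fejerW m y * fejerKernel m y := by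
    exact intervalIntegral.integral_add
      ((((fejerW_continuous m).pow 2).div_const 2).intervalIntegrable _ _)
      (((continuous_id.mul (fejerW_continuous m)).mul (fejerKernel_continuous m)).intervalIntegrable _ _)
  rw [hsplit] at key
  have h2 : ∫ y in (-π)..π, (fejerW m y)^2/2 = (1/2) * ∫ y in (-π)..π, (fejerW m y)^2 := by
    rw [intervalIntegral.integral_div]
    ring
  rw [h2] at key
  norm_num at key
  linarith

lemma contSin (k : ℕ) : Continuous (fun s : ℝ => Real.sin (k * s)) :=
  Real.continuous_sin.comp (continuous_const.mul continuous_id)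

lemma integral_A_sq : ∫ y in (-π)..π, ((y+π)/(2*π))^2 = 2*π/3 := by
  have h : ∀ y ∈ Set.uIcc (-π) π, HasDerivAt (fun y : ℝ => (y+π)^3/(12*π^2)) (((y+π)/(2*π))^2) y := by
    intro y _
    have := (((hasDerivAt_id y).add_const π).pow 3).div_const (12*π^2)
    convert (config := {postTransparency := .default}) this using 1
    have hπ : π ≠ 0 := Real.pi_ne_zero
    simp only [id_eq]
    field_simp
    ring
  rw [intervalIntegral.integral_eq_sub_of_hasDerivAt h
    (Continuous.intervalIntegrable (by fun_prop) _ _)]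
  have hπ : π ≠ 0 := Real.pi_ne_zero
  field_simp
  ring

lemma integral_A_mul_sin (k : ℕ) (hk : 1 ≤ k) :
    ∫ y in (-π)..π, ((y+π)/(2*π)) * Real.sin (k*y) = -(-1)^k/k := by
  have hπ : π ≠ 0 := Real.pi_ne_zero
  have hcg : ∀ y ∈ Set.uIcc (-π) π, ((y+π)/(2*π)) * Real.sin (k*y)
      = (1/(2*π)) * (y * Real.sin (k*y)) + (1/2) * Real.sin (k*y) := by
    intro y _
    field_simp
  rw [intervalIntegral.integral_congr hcg,
    intervalIntegral.integral_add
      (Continuous.intervalIntegrable (by fun_prop) _ _)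
      (Continuous.intervalIntegrable (by fun_prop) _ _),
    intervalIntegral.integral_const_mul, intervalIntegral.integral_const_mul,
    integral_id_mul_sin_pi k hk, integral_sin_c_pi k (Nat.cast_ne_zero.mpr (by omega))]
  have hkne : ((k:ℝ)) ≠ 0 := Nat.cast_ne_zero.mpr (by omega)
  field_simp
  ring

lemma integral_W_sq (m : ℕ) :
    ∫ y in (-π)..π, (fejerW m y)^2
      = 2*π/3 - (2/π) * ∑ k ∈ Icc 1 m, aco m k * (-1)^k/(k:ℝ)^2
        + (1/π) * ∑ k ∈ Icc 1 m, (aco m k)^2/(k:ℝ)^2 := by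
  have hπ : π ≠ 0 := Real.pi_ne_zero
  have hkne : ∀ k ∈ Icc 1 m, ((k:ℝ)) ≠ 0 := fun k hk =>
    Nat.cast_ne_zero.mpr (by have := (Finset.mem_Icc.mp hk).1; omega)
  have hexp : ∀ y ∈ Set.uIcc (-π) π, (fejerW m y)^2
      = ((y+π)/(2*π))^2
        + (2/π) * ∑ k ∈ Icc 1 m, (aco m k/(k:ℝ)) * (((y+π)/(2*π)) * Real.sin (k*y))
        + (1/π^2) * ∑ j ∈ Icc 1 m, ∑ k ∈ Icc 1 m,
            ((aco m j/(j:ℝ)) * (aco m k/(k:ℝ))) * (Real.sin (j*y) * Real.sin (k*y)) := by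
    intro y _
    rw [fejerW_eq]
    have e1 : ∑ k ∈ Icc 1 m, (aco m k/(k:ℝ)) * (((y+π)/(2*π)) * Real.sin (k*y))
        = ((y+π)/(2*π)) * ∑ k ∈ Icc 1 m, aco m k * (Real.sin (k*y)/k) := by
      rw [Finset.mul_sum]
      exact Finset.sum_congr rfl (fun k _ => by ring)
    have e2 : ∑ j ∈ Icc 1 m, ∑ k ∈ Icc 1 m,
          ((aco m j/(j:ℝ)) * (aco m k/(k:ℝ))) * (Real.sin (j*y) * Real.sin (k*y))
        = (∑ k ∈ Icc 1 m, aco m k * (Real.sin (k*y)/k))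
          * (∑ k ∈ Icc 1 m, aco m k * (Real.sin (k*y)/k)) := by
      rw [Finset.sum_mul_sum]
      exact Finset.sum_congr rfl (fun j _ => Finset.sum_congr rfl (fun k _ => by ring))
    rw [e1, e2]
    field_simp
    ring
  rw [intervalIntegral.integral_congr hexp,
    intervalIntegral.integral_add
      (IntervalIntegrable.add (Continuous.intervalIntegrable (by fun_prop) _ _)
        (Continuous.intervalIntegrable (by fun_prop) _ _))
      (Continuous.intervalIntegrable (by fun_prop) _ _),
    intervalIntegral.integral_add
      (Continuous.intervalIntegrable (by fun_prop) _ _)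
      (Continuous.intervalIntegrable (by fun_prop) _ _)]
  rw [integral_A_sq, intervalIntegral.integral_const_mul, intervalIntegral.integral_const_mul,
    intervalIntegral.integral_finset_sum (fun k _ => Continuous.intervalIntegrable (by fun_prop) _ _),
    intervalIntegral.integral_finset_sum (fun j _ => Continuous.intervalIntegrable (by fun_prop) _ _)]
  have hmid : ∀ k ∈ Icc 1 m,
      (∫ y in (-π)..π, (aco m k/(k:ℝ)) * (((y+π)/(2*π)) * Real.sin (k*y)))
        = (aco m k/(k:ℝ)) * (-(-1)^k/(k:ℝ)) := by
    intro k hk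
    rw [intervalIntegral.integral_const_mul, integral_A_mul_sin k (Finset.mem_Icc.mp hk).1]
  have hin : ∀ j ∈ Icc 1 m,
      (∫ y in (-π)..π, ∑ k ∈ Icc 1 m,
          ((aco m j/(j:ℝ)) * (aco m k/(k:ℝ))) * (Real.sin (j*y) * Real.sin (k*y)))
        = (aco m j/(j:ℝ))^2 * π := by
    intro j hj
    rw [intervalIntegral.integral_finset_sum (fun k _ => Continuous.intervalIntegrable (by fun_prop) _ _)]
    have : ∀ k ∈ Icc 1 m,
        (∫ y in (-π)..π, ((aco m j/(j:ℝ)) * (aco m k/(k:ℝ))) * (Real.sin (j*y) * Real.sin (k*y)))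
          = if j = k then (aco m j/(j:ℝ))^2 * π else 0 := by
      intro k hk
      rw [intervalIntegral.integral_const_mul,
        integral_sin_mul_sin_pi j k (Finset.mem_Icc.mp hj).1 (Finset.mem_Icc.mp hk).1]
      by_cases h : j = k
      · subst h; simp only [if_true]; ring
      · simp [h]
    rw [Finset.sum_congr rfl this, Finset.sum_ite_eq]
    simp [hj]
  rw [Finset.sum_congr rfl hmid, Finset.sum_congr rfl hin]
  rw [Finset.mul_sum, Finset.mul_sum, Finset.mul_sum]
  have t1 : ∀ k ∈ Icc 1 m, 2/π * ((aco m k/(k:ℝ)) * (-(-1)^k/(k:ℝ)))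
      = -(2/π * (aco m k * (-1)^k/(k:ℝ)^2)) := by
    intro k hk
    ring
  have t2 : ∀ j ∈ Icc 1 m, 1/π^2 * ((aco m j/(j:ℝ))^2 * π)
      = 1/π * ((aco m j)^2/(j:ℝ)^2) := by
    intro j hj
    have := hkne j hj
    field_simp
  rw [Finset.sum_congr rfl t1, Finset.sum_congr rfl t2, Finset.sum_neg_distrib,
    ← Finset.mul_sum, ← Finset.mul_sum]
  ring

lemma alt_partial_bound {f : ℕ → ℝ} (hf : Antitone f) (h0 : Filter.Tendsto f atTop (𝓝 0)) {l : ℝ}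
    (hl : Filter.Tendsto (fun n => ∑ i ∈ range n, (-1)^i * f i) atTop (𝓝 l)) (n : ℕ) :
    |(∑ i ∈ range n, (-1)^i * f i) - l| ≤ f n := by
  have hfn : ∀ j, 0 ≤ f j := fun j => hf.le_of_tendsto h0 j
  rcases Nat.even_or_odd n with ⟨k, hk⟩ | ⟨k, hk⟩
  · have hn : n = 2*k := by omega
    subst hn
    have h1 := hf.alternating_series_le_tendsto hl k
    have h2 := hf.tendsto_le_alternating_series hl k
    rw [Finset.sum_range_succ] at h2
    have hpow : ((-1:ℝ))^(2*k) = 1 := by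
      rw [pow_mul]; norm_num
    rw [hpow, one_mul] at h2
    rw [abs_le]
    constructor <;> [linarith; linarith [hfn (2*k)]]
  · have hn : n = 2*k+1 := by omega
    subst hn
    have h1 := hf.tendsto_le_alternating_series hl k
    have h2 := hf.alternating_series_le_tendsto hl (k+1)
    have : 2*(k+1) = 2*k+1+1 := by omega
    rw [this, Finset.sum_range_succ] at h2
    have hpow : ((-1:ℝ))^(2*k+1) = -1 := by
      rw [pow_succ, pow_mul]; norm_num
    rw [hpow, neg_one_mul] at h2
    rw [abs_le]
    constructor <;> [linarith [hfn (2*k+1)]; linarith]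

lemma hasSum_inv_sq : HasSum (fun i : ℕ => 1/((i:ℝ)+1)^2) (π^2/6) := by
  have h := hasSum_zeta_two
  have h2 := (hasSum_nat_add_iff' (f := fun n : ℕ => (1:ℝ)/(n:ℝ)^2) 1).mpr h
  simp only [Finset.range_one, Finset.sum_singleton, Nat.cast_zero] at h2
  norm_num at h2
  convert (config := {postTransparency := .default}) h2 using 2 with i
  push_cast
  ring

lemma hasSum_alt_inv_sq : HasSum (fun i : ℕ => (-1:ℝ)^i * (1/((i:ℝ)+1)^2)) (π^2/12) := by
  have g1 := hasSum_inv_sq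
  have hodd : HasSum (fun i : ℕ => (if Odd i then (2:ℝ)/((i:ℝ)+1)^2 else 0)) (π^2/12) := by
    have he : HasSum (fun k : ℕ => (if Odd (2*k) then (2:ℝ)/(((2*k:ℕ):ℝ)+1)^2 else 0)) 0 := by
      have : (fun k : ℕ => (if Odd (2*k) then (2:ℝ)/(((2*k:ℕ):ℝ)+1)^2 else 0)) = fun _ => (0:ℝ) := by
        funext k
        simp [Nat.odd_iff, Nat.mul_mod_right]
      rw [this]
      exact hasSum_zero
    have ho : HasSum (fun k : ℕ => (if Odd (2*k+1) then (2:ℝ)/(((2*k+1:ℕ):ℝ)+1)^2 else 0)) (π^2/12) := by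
      have h2 := g1.mul_left (1/2)
      have heq : ∀ k : ℕ, (if Odd (2*k+1) then (2:ℝ)/(((2*k+1:ℕ):ℝ)+1)^2 else 0)
          = (1/2) * (1/((k:ℝ)+1)^2) := by
        intro k
        have hodd : Odd (2*k+1) := ⟨k, by omega⟩
        rw [if_pos hodd]
        have hk : ((k:ℝ)+1) ≠ 0 := by positivity
        push_cast
        field_simp
        ring
      have h3 : (π^2/12 : ℝ) = (1/2) * (π^2/6) := by ring
      rw [h3, funext heq]
      exact h2
    have := HasSum.even_add_odd
      (f := fun i : ℕ => (if Odd i then (2:ℝ)/((i:ℝ)+1)^2 else 0)) he ho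
    simpa using this
  have key : (fun i : ℕ => (-1:ℝ)^i * (1/((i:ℝ)+1)^2))
      = fun i : ℕ => 1/((i:ℝ)+1)^2 - (if Odd i then (2:ℝ)/((i:ℝ)+1)^2 else 0) := by
    funext i
    rcases Nat.even_or_odd i with h | h
    · rw [h.neg_one_pow]
      simp [Nat.not_odd_iff_even.mpr h]
    · rw [h.neg_one_pow]
      simp only [h, if_true]
      ring
  rw [key]
  convert (config := {postTransparency := .default}) g1.sub hodd using 1
  ring

lemma tendsto_alt_harmonic :
    Filter.Tendsto (fun n => ∑ i ∈ range n, (-1)^i * (1/((i:ℝ)+1))) atTop (𝓝 (Real.log 2)) := by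
  have hf : Antitone (fun i : ℕ => 1/((i:ℝ)+1)) := by
    intro a b hab
    apply one_div_le_one_div_of_le (by positivity)
    have : (a:ℝ) ≤ b := Nat.cast_le.mpr hab
    linarith
  have h0 : Filter.Tendsto (fun i : ℕ => 1/((i:ℝ)+1)) atTop (𝓝 0) :=
    tendsto_one_div_add_atTop_nhds_zero_nat
  obtain ⟨l, hl⟩ := hf.tendsto_alternating_series_of_tendsto_zero h0
  have hS2M : ∀ M : ℕ, ∑ i ∈ range (2*M), (-1)^i * (1/((i:ℝ)+1))
      = ((harmonic (2*M) : ℝ)) - (harmonic M : ℝ) := by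
    intro M
    induction M with
    | zero => simp [harmonic]
    | succ M ih =>
      have : 2*(M+1) = 2*M+1+1 := by omega
      rw [this, Finset.sum_range_succ, Finset.sum_range_succ, ih,
        show (2*M+1+1) = 2*M+1+1 from rfl]
      rw [harmonic_succ M, show (2*M+1+1 : ℕ) = (2*M+1)+1 from rfl, harmonic_succ (2*M+1),
        harmonic_succ (2*M)]
      push_cast
      have hpow : ((-1:ℝ))^(2*M) = 1 := by rw [pow_mul]; norm_num
      have hpow2 : ((-1:ℝ))^(2*M+1) = -1 := by rw [pow_succ, hpow]; norm_num
      rw [hpow, hpow2]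
      have hM1 : ((M:ℝ)+1) ≠ 0 := by positivity
      have hM2 : (2*(M:ℝ)+1) ≠ 0 := by positivity
      have hM3 : (2*(M:ℝ)+2) ≠ 0 := by positivity
      field_simp
      ring
  -- limit of subsequence
  have htwo : Filter.Tendsto (fun M : ℕ => 2*M) atTop atTop :=
    tendsto_atTop_mono (fun n => by simp only [id_eq]; omega) tendsto_id
  have hsub : Filter.Tendsto (fun M : ℕ => ∑ i ∈ range (2*M), (-1)^i * (1/((i:ℝ)+1))) atTop (𝓝 l) :=
    hl.comp htwo
  have hsub2 : Filter.Tendsto (fun M : ℕ => ((harmonic (2*M) : ℝ)) - (harmonic M : ℝ))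
      atTop (𝓝 (Real.log 2)) := by
    have hh := Real.tendsto_harmonic_sub_log
    have hh2 : Filter.Tendsto (fun M : ℕ => (harmonic (2*M) : ℝ) - Real.log ((2*M : ℕ) : ℝ)) atTop
        (𝓝 Real.eulerMascheroniConstant) :=
      hh.comp htwo
    have key : ∀ᶠ M : ℕ in atTop, ((harmonic (2*M) : ℝ) - Real.log ((2*M : ℕ) : ℝ))
        - ((harmonic M : ℝ) - Real.log M) + Real.log 2
        = (harmonic (2*M) : ℝ) - (harmonic M : ℝ) := by
      filter_upwards [eventually_ge_atTop 1] with M hM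
      have hM0 : (0:ℝ) < M := by exact_mod_cast hM
      rw [show ((2*M : ℕ) : ℝ) = 2 * (M:ℝ) by push_cast; ring,
        Real.log_mul (by norm_num) (ne_of_gt hM0)]
      ring
    have := ((hh2.sub hh).add_const (Real.log 2))
    rw [show Real.eulerMascheroniConstant - Real.eulerMascheroniConstant + Real.log 2 = Real.log 2 by ring] at this
    exact Filter.Tendsto.congr' key this
  have : l = Real.log 2 := by
    apply tendsto_nhds_unique hsub
    exact (Filter.tendsto_congr (fun M => (hS2M M))).mpr hsub2
  rwa [this] at hl

lemma gamma_bound (m : ℕ) (hm : 1 ≤ m) :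
    0 ≤ (harmonic m : ℝ) - Real.log m - Real.eulerMascheroniConstant ∧
    (harmonic m : ℝ) - Real.log m - Real.eulerMascheroniConstant ≤ 1/m := by
  have hup := Real.eulerMascheroniConstant_lt_eulerMascheroniSeq' m
  have hlo := Real.eulerMascheroniSeq_lt_eulerMascheroniConstant m
  rw [Real.eulerMascheroniSeq'] at hup
  rw [if_neg (by omega)] at hup
  rw [Real.eulerMascheroniSeq] at hlo
  have hm0 : (0:ℝ) < m := by exact_mod_cast hm
  have hlog : Real.log ((m:ℝ)+1) - Real.log m ≤ 1/m := by
    rw [← Real.log_div (by positivity) (ne_of_gt hm0)]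
    have h1 := Real.log_le_sub_one_of_pos (show (0:ℝ) < ((m:ℝ)+1)/m by positivity)
    have h2 : ((m:ℝ)+1)/m - 1 = 1/m := by field_simp; ring
    linarith
  constructor
  · linarith
  · push_cast at hlo
    linarith

lemma sum_Icc_inv_sq_eq (m : ℕ) :
    ∑ k ∈ Icc 1 m, 1/(k:ℝ)^2 = ∑ i ∈ range m, 1/((i:ℝ)+1)^2 := by
  rw [← Finset.Ico_add_one_right_eq_Icc, Finset.sum_Ico_eq_sum_range, Nat.add_sub_cancel]
  refine Finset.sum_congr rfl (fun i _ => ?_)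
  push_cast
  ring_nf

lemma zeta_tail_bound (m : ℕ) (hm : 1 ≤ m) :
    1/((m:ℝ)+1) ≤ π^2/6 - ∑ k ∈ Icc 1 m, 1/(k:ℝ)^2 ∧
    π^2/6 - ∑ k ∈ Icc 1 m, 1/(k:ℝ)^2 ≤ 1/m := by
  have hm0 : (0:ℝ) < m := by exact_mod_cast hm
  set f : ℕ → ℝ := fun i => 1/((i:ℝ)+1)^2 with hf
  have hT : Filter.Tendsto (fun j : ℕ => ∑ i ∈ Finset.Ico m (m+j), f i) atTop
      (𝓝 (π^2/6 - ∑ i ∈ range m, f i)) := by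
    have h1 : ∀ j : ℕ, ∑ i ∈ Finset.Ico m (m+j), f i
        = (∑ i ∈ range (m+j), f i) - ∑ i ∈ range m, f i := by
      intro j
      rw [Finset.range_eq_Ico,
        ← Finset.sum_Ico_consecutive _ (Nat.zero_le m) (Nat.le_add_right m j)]
      rw [Finset.range_eq_Ico]
      ring
    simp only [h1]
    apply Filter.Tendsto.sub_const
    have := hasSum_inv_sq.tendsto_sum_nat
    exact this.comp (tendsto_atTop_mono (fun j => by simp only [id_eq]; omega) tendsto_id)
  have hhigh : ∀ j : ℕ, ∑ i ∈ Finset.Ico m (m+j), f i ≤ 1/(m:ℝ) - 1/((m:ℝ)+j) := by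
    intro j
    induction j with
    | zero => simp
    | succ j ih =>
      rw [show m+(j+1) = (m+j)+1 from rfl, Finset.sum_Ico_succ_top (Nat.le_add_right m j), hf]
      have hmj : (0:ℝ) < (m:ℝ)+j := by positivity
      have key : 1/(((m+j:ℕ):ℝ)+1)^2 ≤ 1/((m:ℝ)+j) - 1/((m:ℝ)+(j+1):ℝ) := by
        push_cast
        rw [div_sub_div _ _ (ne_of_gt hmj) (by positivity)]
        rw [div_le_div_iff₀ (by positivity) (by positivity)]
        push_cast
        nlinarith
      push_cast at key ⊢
      linarith
  have hlow : ∀ j : ℕ, 1/((m:ℝ)+1) - 1/((m:ℝ)+1+j) ≤ ∑ i ∈ Finset.Ico m (m+j), f i := by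
    intro j
    induction j with
    | zero => simp
    | succ j ih =>
      rw [show m+(j+1) = (m+j)+1 from rfl, Finset.sum_Ico_succ_top (Nat.le_add_right m j), hf]
      have hmj : (0:ℝ) < (m:ℝ)+1+j := by positivity
      have key : 1/((m:ℝ)+1+j) - 1/((m:ℝ)+1+(j+1):ℝ) ≤ 1/(((m+j:ℕ):ℝ)+1)^2 := by
        push_cast
        rw [div_sub_div _ _ (ne_of_gt hmj) (by positivity)]
        rw [div_le_div_iff₀ (by positivity) (by positivity)]
        push_cast
        nlinarith
      push_cast at key ⊢
      linarith
  have hzero : Filter.Tendsto (fun j : ℕ => 1/((m:ℝ)+1+j)) atTop (𝓝 0) := by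
    simp only [one_div]
    apply Filter.Tendsto.comp tendsto_inv_atTop_zero
    exact tendsto_atTop_add_const_left _ _ tendsto_natCast_atTop_atTop
  have hzero2 : Filter.Tendsto (fun j : ℕ => 1/((m:ℝ)+j)) atTop (𝓝 0) := by
    simp only [one_div]
    apply Filter.Tendsto.comp tendsto_inv_atTop_zero
    exact tendsto_atTop_add_const_left _ _ tendsto_natCast_atTop_atTop
  rw [sum_Icc_inv_sq_eq]
  constructor
  · have h1 : Filter.Tendsto (fun j : ℕ => 1/((m:ℝ)+1) - 1/((m:ℝ)+1+j)) atTop (𝓝 (1/((m:ℝ)+1))) := by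
      simpa using (tendsto_const_nhds (x := 1/((m:ℝ)+1)) (f := atTop (α := ℕ))).sub hzero
    exact le_of_tendsto_of_tendsto' h1 hT hlow
  · have h1 : Filter.Tendsto (fun j : ℕ => 1/(m:ℝ) - 1/((m:ℝ)+j)) atTop (𝓝 (1/(m:ℝ))) := by
      simpa using (tendsto_const_nhds (x := 1/(m:ℝ)) (f := atTop (α := ℕ))).sub hzero2
    exact le_of_tendsto_of_tendsto' hT h1 hhigh

lemma decomp1 (m : ℕ) :
    ∑ k ∈ Icc 1 m, aco m k * (-1)^k/(k:ℝ)^2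
      = (∑ k ∈ Icc 1 m, (-1)^k/(k:ℝ)^2) - (1/((m:ℝ)+1)) * ∑ k ∈ Icc 1 m, (-1)^k/(k:ℝ) := by
  rw [Finset.mul_sum, ← Finset.sum_sub_distrib]
  refine Finset.sum_congr rfl (fun k hk => ?_)
  have hk1 : 1 ≤ k := (Finset.mem_Icc.mp hk).1
  have hkne : ((k:ℝ)) ≠ 0 := Nat.cast_ne_zero.mpr (by omega)
  have hn : ((m:ℝ)+1) ≠ 0 := by positivity
  unfold aco
  field_simp

lemma decomp2 (m : ℕ) :
    ∑ k ∈ Icc 1 m, (aco m k)^2/(k:ℝ)^2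
      = (∑ k ∈ Icc 1 m, 1/(k:ℝ)^2) - (2/((m:ℝ)+1)) * (∑ k ∈ Icc 1 m, 1/(k:ℝ))
        + (m:ℝ)/((m:ℝ)+1)^2 := by
  have key : ∀ k ∈ Icc 1 m, (aco m k)^2/(k:ℝ)^2
      = 1/(k:ℝ)^2 - (2/((m:ℝ)+1)) * (1/(k:ℝ)) + 1/((m:ℝ)+1)^2 := by
    intro k hk
    have hk1 : 1 ≤ k := (Finset.mem_Icc.mp hk).1
    have hkne : ((k:ℝ)) ≠ 0 := Nat.cast_ne_zero.mpr (by omega)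
    have hn : ((m:ℝ)+1) ≠ 0 := by positivity
    unfold aco
    field_simp
    ring
  rw [Finset.sum_congr rfl key]
  rw [Finset.sum_add_distrib, Finset.sum_sub_distrib, Finset.sum_const, ← Finset.mul_sum]
  have hcard : (Icc 1 m).card = m := by rw [Nat.card_Icc]; omega
  rw [hcard]
  push_cast
  ring

lemma sum_Icc_alt (m : ℕ) (g : ℝ → ℝ) :
    ∑ k ∈ Icc 1 m, (-1:ℝ)^k * g k = -∑ i ∈ range m, (-1:ℝ)^i * g ((i:ℝ)+1) := by
  rw [← Finset.Ico_add_one_right_eq_Icc, Finset.sum_Ico_eq_sum_range, Nat.add_sub_cancel, ← Finset.sum_neg_distrib]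
  refine Finset.sum_congr rfl (fun i _ => ?_)
  have h : ((-1:ℝ))^(1+i) = -(-1:ℝ)^i := by
    rw [pow_add]; ring
  rw [h]
  push_cast
  ring_nf

lemma P_bound (m : ℕ) :
    |(∑ k ∈ Icc 1 m, (-1:ℝ)^k/(k:ℝ)^2) + π^2/12| ≤ 1/((m:ℝ)+1)^2 := by
  have hf : Antitone (fun i : ℕ => 1/((i:ℝ)+1)^2) := by
    intro a b hab
    apply one_div_le_one_div_of_le (by positivity)
    have : (a:ℝ) ≤ b := Nat.cast_le.mpr hab
    nlinarith
  have h0 : Filter.Tendsto (fun i : ℕ => 1/((i:ℝ)+1)^2) atTop (𝓝 0) := by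
    apply squeeze_zero (fun n => by positivity) (g := fun i : ℕ => 1/((i:ℝ)+1))
    · intro n
      apply one_div_le_one_div_of_le (by positivity)
      nlinarith [Nat.cast_nonneg (α := ℝ) n]
    · exact tendsto_one_div_add_atTop_nhds_zero_nat
  have hb := alt_partial_bound hf h0 hasSum_alt_inv_sq.tendsto_sum_nat m
  have hid : ∑ k ∈ Icc 1 m, (-1:ℝ)^k/(k:ℝ)^2
      = -∑ i ∈ range m, (-1:ℝ)^i * (1/((i:ℝ)+1)^2) := by
    have := sum_Icc_alt m (fun x => 1/x^2)
    rw [← this]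
    exact Finset.sum_congr rfl (fun k _ => by ring)
  rw [hid]
  rw [show -(∑ i ∈ range m, (-1:ℝ)^i * (1/((i:ℝ)+1)^2)) + π^2/12
      = -((∑ i ∈ range m, (-1:ℝ)^i * (1/((i:ℝ)+1)^2)) - π^2/12) by ring, abs_neg]
  exact hb

lemma Q_bound (m : ℕ) :
    |(∑ k ∈ Icc 1 m, (-1:ℝ)^k/(k:ℝ)) + Real.log 2| ≤ 1/((m:ℝ)+1) := by
  have hf : Antitone (fun i : ℕ => 1/((i:ℝ)+1)) := by
    intro a b hab
    apply one_div_le_one_div_of_le (by positivity)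
    have : (a:ℝ) ≤ b := Nat.cast_le.mpr hab
    linarith
  have h0 : Filter.Tendsto (fun i : ℕ => 1/((i:ℝ)+1)) atTop (𝓝 0) :=
    tendsto_one_div_add_atTop_nhds_zero_nat
  have hb := alt_partial_bound hf h0 tendsto_alt_harmonic m
  have hid : ∑ k ∈ Icc 1 m, (-1:ℝ)^k/(k:ℝ)
      = -∑ i ∈ range m, (-1:ℝ)^i * (1/((i:ℝ)+1)) := by
    have := sum_Icc_alt m (fun x => 1/x)
    rw [← this]
    exact Finset.sum_congr rfl (fun k _ => by ring)
  rw [hid]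
  rw [show -(∑ i ∈ range m, (-1:ℝ)^i * (1/((i:ℝ)+1))) + Real.log 2
      = -((∑ i ∈ range m, (-1:ℝ)^i * (1/((i:ℝ)+1))) - Real.log 2) by ring, abs_neg]
  exact hb

lemma H_eq (m : ℕ) : ∑ k ∈ Icc 1 m, 1/(k:ℝ) = (harmonic m : ℝ) := by
  rw [harmonic, ← Finset.Ico_add_one_right_eq_Icc, Finset.sum_Ico_eq_sum_range, Nat.add_sub_cancel]
  push_cast
  refine Finset.sum_congr rfl (fun i _ => ?_)
  rw [one_div]
  norm_num
  ring_nf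

lemma nu_exact (m : ℕ) :
    2 * Real.pi * ∫ y in (-Real.pi)..Real.pi, y * fejerW m y * fejerKernel m y
      = π^2/3 + 2 * ∑ k ∈ Icc 1 m, aco m k * (-1)^k/(k:ℝ)^2
        - ∑ k ∈ Icc 1 m, (aco m k)^2/(k:ℝ)^2 := by
  rw [ibp_step, integral_W_sq]
  have hπ : π ≠ 0 := Real.pi_ne_zero
  field_simp
  ring

set_option maxHeartbeats 1000000 in
theorem nu_one_asymp :
    ∃ C : ℝ, 0 < C ∧ ∀ m : ℕ, 1 ≤ m →
      |(2 * Real.pi * ∫ y in (-Real.pi)..Real.pi, y * fejerW m y * fejerKernel m y)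
          - 2 * Real.log m / (m + 1)
          - 2 * (Real.log 2 + Real.eulerMascheroniConstant) / (m + 1)|
        ≤ C / (m : ℝ) ^ 2 := by
  refine ⟨8, by norm_num, fun m hm => ?_⟩
  have hm1 : (1:ℝ) ≤ m := by exact_mod_cast hm
  have hm0 : (0:ℝ) < m := by linarith
  have hn0 : (0:ℝ) < (m:ℝ)+1 := by linarith
  rw [nu_exact m, decomp1 m, decomp2 m, H_eq m]
  set P := ∑ k ∈ Icc 1 m, (-1:ℝ)^k/(k:ℝ)^2 with hPdef
  set Q := ∑ k ∈ Icc 1 m, (-1:ℝ)^k/(k:ℝ) with hQdef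
  set R := ∑ k ∈ Icc 1 m, 1/(k:ℝ)^2 with hRdef
  obtain ⟨hD0, hD1⟩ := gamma_bound m hm
  obtain ⟨hT0, hT1⟩ := zeta_tail_bound m hm
  obtain ⟨hP1, hP2⟩ := abs_le.mp (P_bound m)
  obtain ⟨hQ1, hQ2⟩ := abs_le.mp (Q_bound m)
  have e1 : (0:ℝ) ≤ 2/((m:ℝ)+1) := by positivity
  have q1 : (2/((m:ℝ)+1)) * (Q + Real.log 2) ≤ (2/((m:ℝ)+1)) * (1/((m:ℝ)+1)) :=
    mul_le_mul_of_nonneg_left hQ2 e1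
  have q2 : (2/((m:ℝ)+1)) * (-(1/((m:ℝ)+1))) ≤ (2/((m:ℝ)+1)) * (Q + Real.log 2) :=
    mul_le_mul_of_nonneg_left hQ1 e1
  have d1 : (2/((m:ℝ)+1)) * ((harmonic m : ℝ) - Real.log m - Real.eulerMascheroniConstant)
      ≤ (2/((m:ℝ)+1)) * (1/(m:ℝ)) := mul_le_mul_of_nonneg_left hD1 e1
  have d0 : 0 ≤ (2/((m:ℝ)+1)) * ((harmonic m : ℝ) - Real.log m - Real.eulerMascheroniConstant) :=
    mul_nonneg e1 hD0
  have c1 : 1/((m:ℝ)+1)^2 ≤ 1/(m:ℝ)^2 := by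
    apply one_div_le_one_div_of_le (by positivity)
    nlinarith
  have c2 : (2/((m:ℝ)+1)) * (1/((m:ℝ)+1)) ≤ 2*(1/(m:ℝ)^2) := by
    rw [show (2:ℝ)*(1/(m:ℝ)^2) = 2/(m:ℝ)^2 by ring, div_mul_div_comm,
      div_le_div_iff₀ (by positivity) (by positivity)]
    nlinarith
  have c3 : (2/((m:ℝ)+1)) * (1/(m:ℝ)) ≤ 2*(1/(m:ℝ)^2) := by
    rw [show (2:ℝ)*(1/(m:ℝ)^2) = 2/(m:ℝ)^2 by ring, div_mul_div_comm,
      div_le_div_iff₀ (by positivity) (by positivity)]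
    nlinarith
  have c4 : (m:ℝ)/((m:ℝ)+1)^2 ≤ 1/((m:ℝ)+1) := by
    rw [div_le_div_iff₀ (by positivity) (by positivity)]
    nlinarith
  have c5 : 1/(m:ℝ) - (m:ℝ)/((m:ℝ)+1)^2 ≤ 2*(1/(m:ℝ)^2) := by
    rw [show (2:ℝ)*(1/(m:ℝ)^2) = 2/(m:ℝ)^2 by ring,
      div_sub_div _ _ (ne_of_gt hm0) (by positivity), div_le_div_iff₀ (by positivity) (by positivity)]
    nlinarith
  have key : π^2/3 + 2 * (P - (1/((m:ℝ)+1)) * Q)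
        - (R - (2/((m:ℝ)+1)) * ((harmonic m : ℝ)) + (m:ℝ)/((m:ℝ)+1)^2)
        - 2 * Real.log m / ((m:ℝ) + 1)
        - 2 * (Real.log 2 + Real.eulerMascheroniConstant) / ((m:ℝ) + 1)
      = 2*(P + π^2/12) - ((2/((m:ℝ)+1)) * (Q + Real.log 2))
        + ((2/((m:ℝ)+1)) * ((harmonic m : ℝ) - Real.log m - Real.eulerMascheroniConstant))
        + ((π^2/6 - R) - (m:ℝ)/((m:ℝ)+1)^2) := by
    ring
  rw [← hPdef] at hP1 hP2
  rw [← hQdef] at hQ1 hQ2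
  rw [← hRdef] at hT0 hT1
  have hx1 : (0:ℝ) < 1/(m:ℝ)^2 := by positivity
  have hx2 : (0:ℝ) < 1/((m:ℝ)+1) := by positivity
  have hx3 : (0:ℝ) < 1/((m:ℝ)+1)^2 := by positivity
  have hx4 : (0:ℝ) < 1/(m:ℝ) := by positivity
  rw [show (8:ℝ)/(m:ℝ)^2 = 8*(1/(m:ℝ)^2) by ring, key, abs_le]
  constructor
  · linarith
  · linarith
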